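/- Let λ̂₁ > λ̂₂ > λ̂₃ > λ̂₄ be reals with λ̂₁+λ̂₂+λ̂₃+λ̂₄ = 0, and set c₃ = 2(λ̂₁+λ̂₂), c₂ = 2(λ̂₁+λ̂₃), c₁ = 2|λ̂₁+λ̂₄|. Then for every x ∈ [0, c₂], ∫_{0}^{∞} x·y·( −p(x−c₂, y−c₃) + p(x−c₂, y−c₁) + p(x−c₂, y+c₁) ) dy = ((c₁² − c₃²)/64) · x · (x − c₂)², and for every x ≥ c₂ the same integral equals 0. -/

import Mathlib

open MeasureTheory

/-- The piecewise-polynomial density `p(r,s)`. -/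
noncomputable def pDen (r s : ℝ) : ℝ :=
  if 0 ≤ s ∧ s ≤ -r then (r + s) ^ 2 / 64
  else if r ≤ s ∧ s ≤ 0 then (r ^ 2 + 2 * r * s - s ^ 2) / 64
  else if s ≤ r ∧ r ≤ 0 then r ^ 2 / 32
  else 0

lemma pDen_zero_of_nonneg {r : ℝ} (s : ℝ) (hr : 0 ≤ r) : pDen r s = 0 := by
  simp only [pDen]
  split_ifs with h1 h2 h3
  · have hr0 : r = 0 := le_antisymm (by linarith [h1.1, h1.2]) hr
    have hs0 : s = 0 := le_antisymm (by rw [hr0] at h1; simpa using h1.2) h1.1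
    rw [hr0, hs0]; norm_num
  · have hr0 : r = 0 := le_antisymm (by linarith [h2.1, h2.2]) hr
    have hs0 : s = 0 := le_antisymm h2.2 (by rw [hr0] at h2; exact h2.1)
    rw [hr0, hs0]; norm_num
  · have hr0 : r = 0 := le_antisymm h3.2 hr
    rw [hr0]; norm_num
  · rfl

lemma pDen_hi {a : ℝ} (s : ℝ) (ha : 0 ≤ a) (hs : a ≤ s) : pDen (-a) s = 0 := by
  simp only [pDen, neg_neg]
  split_ifs with h1 h2 h3
  · have : s = a := le_antisymm h1.2 hs
    rw [this]; ring
  · have ha0 : a = 0 := le_antisymm (by linarith [h2.2]) ha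
    have hs0 : s = 0 := le_antisymm h2.2 (by linarith)
    rw [ha0, hs0]; norm_num
  · exfalso; have := h3.1; -- s ≤ -a and a ≤ s with 0 ≤ a
    have : ¬ (0 ≤ s ∧ s ≤ a) := h1
    exact this ⟨by linarith [h3.1], by linarith [h3.1]⟩
  · rfl

lemma pDen_midpos {a : ℝ} (s : ℝ) (hs0 : 0 ≤ s) (hsa : s ≤ a) :
    pDen (-a) s = (s - a) ^ 2 / 64 := by
  simp only [pDen, neg_neg]
  rw [if_pos ⟨hs0, hsa⟩]; ring

lemma pDen_midneg {a : ℝ} (s : ℝ) (h1 : -a ≤ s) (h2 : s ≤ 0) :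
    pDen (-a) s = (a ^ 2 - 2 * a * s - s ^ 2) / 64 := by
  simp only [pDen, neg_neg]
  split_ifs with hA hB hC
  · have : s = 0 := le_antisymm h2 hA.1
    rw [this]; ring
  · ring
  · have : s = -a := le_antisymm hC.1 h1
    rw [this]; ring
  · exact absurd ⟨h1, h2⟩ hB

lemma pDen_lo {a : ℝ} (s : ℝ) (ha : 0 ≤ a) (hs : s ≤ -a) : pDen (-a) s = a ^ 2 / 32 := by
  simp only [pDen, neg_neg]
  split_ifs with hA hB hC
  · have ha0 : a = 0 := by linarith [hA.1]
    have hs0 : s = 0 := le_antisymm (by linarith) hA.1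
    rw [ha0, hs0]; norm_num
  · have : s = -a := le_antisymm hs hB.1
    rw [this]; ring
  · ring
  · exact absurd ⟨hs, by linarith⟩ hC

lemma integral_cubic_congr (f : ℝ → ℝ) (A B C D u v : ℝ)
    (h : ∀ y ∈ Set.uIcc u v, f y = A * y ^ 3 + B * y ^ 2 + C * y + D) :
    (∫ y in u..v, f y) =
      A * (v ^ 4 - u ^ 4) / 4 + B * (v ^ 3 - u ^ 3) / 3 + C * (v ^ 2 - u ^ 2) / 2 + D * (v - u) := by
  rw [intervalIntegral.integral_congr h]
  have hd : ∀ y : ℝ, HasDerivAt (fun t => A * t ^ 4 / 4 + B * t ^ 3 / 3 + C * t ^ 2 / 2 + D * t)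
      (A * y ^ 3 + B * y ^ 2 + C * y + D) y := by
    intro y
    have h1 : HasDerivAt (fun t : ℝ => A * t ^ 4 / 4 + B * t ^ 3 / 3 + C * t ^ 2 / 2 + D * t)
        (A * ((4:ℕ) * y ^ 3) / 4 + B * ((3:ℕ) * y ^ 2) / 3 + C * ((2:ℕ) * y ^ 1) / 2 + D * 1) y := by
      exact ((((hasDerivAt_pow 4 y).const_mul A).div_const 4).add
        (((hasDerivAt_pow 3 y).const_mul B).div_const 3)).add
        (((hasDerivAt_pow 2 y).const_mul C).div_const 2) |>.add ((hasDerivAt_id y).const_mul D)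
    convert h1 using 1; push_cast; ring
  rw [intervalIntegral.integral_eq_sub_of_hasDerivAt (fun y _ => hd y)
    ((by fun_prop : Continuous fun y : ℝ => A * y ^ 3 + B * y ^ 2 + C * y + D).intervalIntegrable u v)]
  ring

lemma ii_of_eqOn {f g : ℝ → ℝ} {u v : ℝ} (hg : Continuous g)
    (h : Set.EqOn f g (Set.uIcc u v)) : IntervalIntegrable f volume u v := by
  rw [intervalIntegrable_iff]
  exact (intervalIntegrable_iff.mp (hg.intervalIntegrable u v)).congr_fun
    (fun y hy => (h (Set.uIoc_subset_uIcc hy)).symm) measurableSet_uIoc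

lemma ii_cubic {f : ℝ → ℝ} {A B C D u v : ℝ}
    (h : ∀ y ∈ Set.uIcc u v, f y = A * y ^ 3 + B * y ^ 2 + C * y + D) :
    IntervalIntegrable f volume u v :=
  ii_of_eqOn (by fun_prop) h

lemma term_big (x a c M : ℝ) (ha : 0 ≤ a) (hac : a ≤ c) (hM : c + a ≤ M) :
    IntervalIntegrable (fun y => x * y * pDen (-a) (y - c)) volume 0 M ∧
    (∫ y in (0:ℝ)..M, x * y * pDen (-a) (y - c)) =
      x * (c * a ^ 3 / 32 - 5 * a ^ 4 / 384 + a ^ 2 * (c - a) ^ 2 / 64) := by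
  have h1 : ∀ y ∈ Set.uIcc (0:ℝ) (c - a), x * y * pDen (-a) (y - c) =
      0 * y ^ 3 + 0 * y ^ 2 + (x * a ^ 2 / 32) * y + 0 := by
    intro y hy
    rw [Set.uIcc_of_le (by linarith)] at hy
    rw [pDen_lo _ ha (by linarith [hy.2])]; ring
  have h2 : ∀ y ∈ Set.uIcc (c - a) c, x * y * pDen (-a) (y - c) =
      (-(x / 64)) * y ^ 3 + (x * (2 * c - 2 * a) / 64) * y ^ 2 +
        (x * (a ^ 2 + 2 * a * c - c ^ 2) / 64) * y + 0 := by
    intro y hy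
    rw [Set.uIcc_of_le (by linarith)] at hy
    rw [pDen_midneg _ (by linarith [hy.1]) (by linarith [hy.2])]; ring
  have h3 : ∀ y ∈ Set.uIcc c (c + a), x * y * pDen (-a) (y - c) =
      (x / 64) * y ^ 3 + (-(2 * (c + a) * x / 64)) * y ^ 2 + ((c + a) ^ 2 * x / 64) * y + 0 := by
    intro y hy
    rw [Set.uIcc_of_le (by linarith)] at hy
    rw [pDen_midpos _ (by linarith [hy.1]) (by linarith [hy.2])]; ring
  have h4 : ∀ y ∈ Set.uIcc (c + a) M, x * y * pDen (-a) (y - c) =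
      0 * y ^ 3 + 0 * y ^ 2 + 0 * y + 0 := by
    intro y hy
    rw [Set.uIcc_of_le (by linarith)] at hy
    rw [pDen_hi _ ha (by linarith [hy.1])]; ring
  have i1 := ii_cubic h1
  have i2 := ii_cubic h2
  have i3 := ii_cubic h3
  have i4 := ii_cubic h4
  have s1 := intervalIntegral.integral_add_adjacent_intervals i1 i2
  have s2 := intervalIntegral.integral_add_adjacent_intervals (i1.trans i2) i3
  have s3 := intervalIntegral.integral_add_adjacent_intervals ((i1.trans i2).trans i3) i4
  refine ⟨((i1.trans i2).trans i3).trans i4, ?_⟩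
  rw [← s3, ← s2, ← s1, integral_cubic_congr _ _ _ _ _ _ _ h1, integral_cubic_congr _ _ _ _ _ _ _ h2,
    integral_cubic_congr _ _ _ _ _ _ _ h3, integral_cubic_congr _ _ _ _ _ _ _ h4]
  ring

lemma term_small (x a c M : ℝ) (hc : 0 ≤ c) (hca : c ≤ a) (hM : c + a ≤ M) :
    IntervalIntegrable (fun y => x * y * pDen (-a) (y - c)) volume 0 M ∧
    (∫ y in (0:ℝ)..M, x * y * pDen (-a) (y - c)) =
      x * ((a ^ 2 + 2 * a * c - c ^ 2) * c ^ 2 / 2 + (2 * c - 2 * a) * c ^ 3 / 3 - c ^ 4 / 4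
        + a ^ 4 / 12 + c * a ^ 3 / 3) / 64 := by
  have h2 : ∀ y ∈ Set.uIcc (0:ℝ) c, x * y * pDen (-a) (y - c) =
      (-(x / 64)) * y ^ 3 + (x * (2 * c - 2 * a) / 64) * y ^ 2 +
        (x * (a ^ 2 + 2 * a * c - c ^ 2) / 64) * y + 0 := by
    intro y hy
    rw [Set.uIcc_of_le (by linarith)] at hy
    rw [pDen_midneg _ (by linarith [hy.1]) (by linarith [hy.2])]; ring
  have h3 : ∀ y ∈ Set.uIcc c (c + a), x * y * pDen (-a) (y - c) =
      (x / 64) * y ^ 3 + (-(2 * (c + a) * x / 64)) * y ^ 2 + ((c + a) ^ 2 * x / 64) * y + 0 := by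
    intro y hy
    rw [Set.uIcc_of_le (by linarith)] at hy
    rw [pDen_midpos _ (by linarith [hy.1]) (by linarith [hy.2])]; ring
  have h4 : ∀ y ∈ Set.uIcc (c + a) M, x * y * pDen (-a) (y - c) =
      0 * y ^ 3 + 0 * y ^ 2 + 0 * y + 0 := by
    intro y hy
    rw [Set.uIcc_of_le (by linarith)] at hy
    rw [pDen_hi _ (by linarith) (by linarith [hy.1])]; ring
  have i2 := ii_cubic h2
  have i3 := ii_cubic h3
  have i4 := ii_cubic h4
  have s2 := intervalIntegral.integral_add_adjacent_intervals i2 i3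
  have s3 := intervalIntegral.integral_add_adjacent_intervals (i2.trans i3) i4
  refine ⟨(i2.trans i3).trans i4, ?_⟩
  rw [← s3, ← s2, integral_cubic_congr _ _ _ _ _ _ _ h2,
    integral_cubic_congr _ _ _ _ _ _ _ h3, integral_cubic_congr _ _ _ _ _ _ _ h4]
  ring

lemma term_plus_big (x a c M : ℝ) (ha : 0 ≤ a) (hac : a ≤ c) (hM : 0 ≤ M) :
    IntervalIntegrable (fun y => x * y * pDen (-a) (y + c)) volume 0 M ∧
    (∫ y in (0:ℝ)..M, x * y * pDen (-a) (y + c)) = 0 := by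
  have h1 : ∀ y ∈ Set.uIcc (0:ℝ) M, x * y * pDen (-a) (y + c) =
      0 * y ^ 3 + 0 * y ^ 2 + 0 * y + 0 := by
    intro y hy
    rw [Set.uIcc_of_le hM] at hy
    rw [pDen_hi _ ha (by linarith [hy.1])]; ring
  refine ⟨ii_cubic h1, ?_⟩
  rw [integral_cubic_congr _ _ _ _ _ _ _ h1]; ring

lemma term_plus_small (x a c M : ℝ) (hc : 0 ≤ c) (hca : c ≤ a) (hM : a - c ≤ M) :
    IntervalIntegrable (fun y => x * y * pDen (-a) (y + c)) volume 0 M ∧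
    (∫ y in (0:ℝ)..M, x * y * pDen (-a) (y + c)) = x * (a - c) ^ 4 / 768 := by
  have h1 : ∀ y ∈ Set.uIcc (0:ℝ) (a - c), x * y * pDen (-a) (y + c) =
      (x / 64) * y ^ 3 + (-(2 * (a - c) * x / 64)) * y ^ 2 + ((a - c) ^ 2 * x / 64) * y + 0 := by
    intro y hy
    rw [Set.uIcc_of_le (by linarith)] at hy
    rw [pDen_midpos _ (by linarith [hy.1]) (by linarith [hy.2])]; ring
  have h2 : ∀ y ∈ Set.uIcc (a - c) M, x * y * pDen (-a) (y + c) =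
      0 * y ^ 3 + 0 * y ^ 2 + 0 * y + 0 := by
    intro y hy
    rw [Set.uIcc_of_le (by linarith)] at hy
    rw [pDen_hi _ (by linarith) (by linarith [hy.1])]; ring
  have i1 := ii_cubic h1
  have i2 := ii_cubic h2
  have s1 := intervalIntegral.integral_add_adjacent_intervals i1 i2
  refine ⟨i1.trans i2, ?_⟩
  rw [← s1, integral_cubic_congr _ _ _ _ _ _ _ h1, integral_cubic_congr _ _ _ _ _ _ _ h2]
  ring

theorem integral_I2 (l1 l2 l3 l4 : ℝ) (h12 : l2 < l1) (h23 : l3 < l2) (h34 : l4 < l3)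
    (hsum : l1 + l2 + l3 + l4 = 0)
    (c1 c2 c3 : ℝ) (hc3 : c3 = 2 * (l1 + l2)) (hc2 : c2 = 2 * (l1 + l3))
    (hc1 : c1 = 2 * |l1 + l4|) :
    (∀ x : ℝ, 0 ≤ x → x ≤ c2 →
      (∫ y in Set.Ici (0 : ℝ), x * y * (-pDen (x - c2) (y - c3) + pDen (x - c2) (y - c1) + pDen (x - c2) (y + c1)))
        = (c1 ^ 2 - c3 ^ 2) / 64 * x * (x - c2) ^ 2) ∧
    (∀ x : ℝ, c2 ≤ x →
      (∫ y in Set.Ici (0 : ℝ), x * y * (-pDen (x - c2) (y - c3) + pDen (x - c2) (y - c1) + pDen (x - c2) (y + c1)))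
        = 0) := by
  have hc2c3 : c2 < c3 := by rw [hc2, hc3]; linarith
  have hc1c2 : c1 ≤ c2 := by
    have habs : |l1 + l4| ≤ l1 + l3 := abs_le.mpr ⟨by linarith, by linarith⟩
    rw [hc1, hc2]; linarith
  have hc1nn : 0 ≤ c1 := by rw [hc1]; positivity
  constructor
  · intro x hx0 hxc2
    have hc2nn : 0 ≤ c2 := le_trans hx0 hxc2
    set a := c2 - x with hadef
    have ha0 : 0 ≤ a := by rw [hadef]; linarith
    have hac2 : a ≤ c2 := by rw [hadef]; linarith
    have hxc : x - c2 = -a := by rw [hadef]; ring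
    have hB0 : (0:ℝ) ≤ c3 + a := by linarith
    rw [hxc]
    have step1 : (∫ y in Set.Ici (0:ℝ),
        x * y * (-pDen (-a) (y - c3) + pDen (-a) (y - c1) + pDen (-a) (y + c1)))
        = ∫ y in Set.Ioc (0:ℝ) (c3 + a),
        x * y * (-pDen (-a) (y - c3) + pDen (-a) (y - c1) + pDen (-a) (y + c1)) := by
      apply setIntegral_eq_of_subset_of_forall_diff_eq_zero measurableSet_Ici
        (fun y hy => le_of_lt hy.1)
      intro y hy
      obtain ⟨hy1, hy2⟩ := hy
      rcases eq_or_lt_of_le (Set.mem_Ici.mp hy1 : (0:ℝ) ≤ y) with h | h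
      · rw [← h]; ring
      · have hyB : c3 + a < y := by
          by_contra hcon
          exact hy2 ⟨h, le_of_not_gt hcon⟩
        rw [pDen_hi _ ha0 (by linarith), pDen_hi _ ha0 (by linarith),
          pDen_hi _ ha0 (by linarith)]
        ring
    rw [step1, ← intervalIntegral.integral_of_le hB0]
    have hsplit : (fun y => x * y * (-pDen (-a) (y - c3) + pDen (-a) (y - c1) + pDen (-a) (y + c1)))
        = fun y => (x * y * pDen (-a) (y - c1) + x * y * pDen (-a) (y + c1))
            - x * y * pDen (-a) (y - c3) := by
      funext y; ring
    obtain ⟨iT1, vT1⟩ := term_big x a c3 (c3 + a) ha0 (by linarith) le_rfl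
    rcases le_total a c1 with hA | hBc
    · obtain ⟨iT2, vT2⟩ := term_big x a c1 (c3 + a) ha0 hA (by linarith)
      obtain ⟨iT3, vT3⟩ := term_plus_big x a c1 (c3 + a) ha0 hA hB0
      rw [hsplit, intervalIntegral.integral_sub (iT2.add iT3) iT1,
        intervalIntegral.integral_add iT2 iT3, vT1, vT2, vT3]
      ring
    · obtain ⟨iT2, vT2⟩ := term_small x a c1 (c3 + a) hc1nn hBc (by linarith)
      obtain ⟨iT3, vT3⟩ := term_plus_small x a c1 (c3 + a) hc1nn hBc (by linarith)
      rw [hsplit, intervalIntegral.integral_sub (iT2.add iT3) iT1,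
        intervalIntegral.integral_add iT2 iT3, vT1, vT2, vT3]
      ring
  · intro x hx
    have hr : 0 ≤ x - c2 := by linarith
    have hz : ∀ y : ℝ, x * y * (-pDen (x - c2) (y - c3) + pDen (x - c2) (y - c1)
        + pDen (x - c2) (y + c1)) = 0 := by
      intro y
      rw [pDen_zero_of_nonneg _ hr, pDen_zero_of_nonneg _ hr, pDen_zero_of_nonneg _ hr]
      ring
    simp only [hz, integral_zero]
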